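/- Let p, q ∈ (1/2, 1), σ₁₁, σ₂₂ > 0, μ₁, μ₂ ∈ ℝ, ρ ∈ (−1, 1), and y₁ ∈ ℝ, y₂ ≥ 0. Let k₁ = α_p√σ₁₁ − μ₁, and let X be a real random variable with law N(c₂, e₂₂), where c₂ = μ₂ − ρ α_p √σ₂₂ and e₂₂ = σ₂₂(1 − ρ²). Define W = −k₁ y₁ + y₂ X. Then inf{a ∈ ℝ : P(−W ≥ a) ≤ 1 − q} = (ψ√σ₂₂ − μ₂) y₂ + (α_p√σ₁₁ − μ₁) y₁, where ψ = α_q√(1 − ρ²) + α_p ρ. -/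

import Mathlib

open MeasureTheory ProbabilityTheory

section CovarHelpers
open Set

lemma gauss_std_strictMono : StrictMono (cdf (gaussianReal 0 1)) := by
  intro x y hxy
  have h1 : (1 : NNReal) ≠ 0 := one_ne_zero
  have hIoc : gaussianReal 0 1 (Ioc x y) ≠ 0 := by
    intro h0
    have := (gaussianReal_absolutelyContinuous' 0 h1) h0
    simp [Real.volume_Ioc, hxy, sub_pos.mpr hxy] at this
    linarith
  have hsplit : gaussianReal 0 1 (Iic x) + gaussianReal 0 1 (Ioc x y)
      = gaussianReal 0 1 (Iic y) := by
    rw [← measure_union (by exact Iic_disjoint_Ioc le_rfl) measurableSet_Ioc,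
      Iic_union_Ioc_eq_Iic hxy.le]
  have hlt : gaussianReal 0 1 (Iic x) < gaussianReal 0 1 (Iic y) := by
    rw [← hsplit]
    exact ENNReal.lt_add_right (measure_ne_top _ _) hIoc
  rw [← ofReal_cdf, ← ofReal_cdf] at hlt
  exact (ENNReal.ofReal_lt_ofReal_iff_of_nonneg (cdf_nonneg _ x)).mp hlt

lemma gauss_std_symm (x : ℝ) :
    cdf (gaussianReal 0 1) (-x) = 1 - cdf (gaussianReal 0 1) x := by
  have h1 : (1 : NNReal) ≠ 0 := one_ne_zero
  have hmap : (gaussianReal (0:ℝ) 1).map (fun y => (-1 : ℝ) * y) = gaussianReal 0 1 := by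
    rw [gaussianReal_map_const_mul, mul_zero]
    congr 1
    ext
    norm_num
  have hIci : gaussianReal (0:ℝ) 1 (Iic (-x)) = gaussianReal 0 1 (Ici x) := by
    conv_lhs => rw [← hmap]
    rw [Measure.map_apply (measurable_const_mul _) measurableSet_Iic]
    congr 1
    ext y
    simp only [mem_preimage, mem_Iic, mem_Ici]
    constructor <;> intro h <;> nlinarith
  have hsingleton : gaussianReal (0:ℝ) 1 {x} = 0 :=
    (gaussianReal_absolutelyContinuous 0 h1) (measure_singleton x)
  have hIio : gaussianReal (0:ℝ) 1 (Iio x) = gaussianReal 0 1 (Iic x) := by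
    rw [← Iio_union_right, measure_union (by simp) (measurableSet_singleton x), hsingleton,
      add_zero]
  have hcompl : gaussianReal (0:ℝ) 1 (Ici x) = 1 - gaussianReal 0 1 (Iic x) := by
    rw [← compl_Iio,
      measure_compl measurableSet_Iio (measure_ne_top _ _), measure_univ, hIio]
  have h2 : ENNReal.ofReal (cdf (gaussianReal 0 1) (-x))
      = ENNReal.ofReal (1 - cdf (gaussianReal 0 1) x) := by
    rw [ofReal_cdf, hIci, hcompl, ENNReal.ofReal_sub _ (cdf_nonneg _ x), ENNReal.ofReal_one,
      ofReal_cdf]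
  have hle : cdf (gaussianReal 0 1) x ≤ 1 := cdf_le_one _ x
  exact (ENNReal.ofReal_eq_ofReal_iff (cdf_nonneg _ (-x)) (by linarith)).mp h2

lemma gauss_std_Iic (c v' : ℝ) (hv : 0 < v') (z : ℝ) :
    gaussianReal c v'.toNNReal (Iic (c + z * Real.sqrt v')) = gaussianReal 0 1 (Iic z) := by
  have hs : (0:ℝ) < Real.sqrt v' := Real.sqrt_pos.mpr hv
  have hmap : (gaussianReal c v'.toNNReal).map
      (fun x => (Real.sqrt v')⁻¹ * (x + (-c))) = gaussianReal 0 1 := by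
    have h1 : (gaussianReal c v'.toNNReal).map (· + (-c)) = gaussianReal 0 v'.toNNReal := by
      rw [gaussianReal_map_add_const]; norm_num
    have comp : (fun x : ℝ => (Real.sqrt v')⁻¹ * (x + (-c)))
        = (fun x => (Real.sqrt v')⁻¹ * x) ∘ (· + (-c)) := rfl
    rw [comp, ← Measure.map_map (measurable_const_mul _) (measurable_id'.add_const _), h1,
      gaussianReal_map_const_mul, mul_zero]
    congr 1
    ext
    push_cast
    rw [Real.coe_toNNReal _ hv.le]
    rw [← Real.sq_sqrt hv.le]
    field_simp
    rw [Real.sqrt_sq hs.le]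
  conv_rhs => rw [← hmap]
  rw [Measure.map_apply (by fun_prop) measurableSet_Iic]
  congr 1
  ext x
  simp only [mem_preimage, mem_Iic]
  rw [inv_mul_le_iff₀ hs]
  constructor <;> intro h <;> nlinarith

end CovarHelpers

/-- equation (6) of the paper: CoVaR of a two-stock portfolio given that
stock 1 is distressed. With `k₁ = α_p√σ₁₁ - μ₁`, `X ~ N(μ₂ - ρα_p√σ₂₂, σ₂₂(1-ρ²))` and
`W = -k₁y₁ + y₂X`, one has
`inf {a : P(-W ≥ a) ≤ 1 - q} = (ψ√σ₂₂ - μ₂)y₂ + (α_p√σ₁₁ - μ₁)y₁` where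
`ψ = α_q√(1-ρ²) + α_pρ`. -/
theorem covar_two_stocks {Ω : Type*} [MeasureSpace Ω] [IsProbabilityMeasure (ℙ : Measure Ω)]
    (p q : ℝ) (hp : p ∈ Set.Ioo (1/2 : ℝ) 1) (hq : q ∈ Set.Ioo (1/2 : ℝ) 1)
    (σ11 σ22 : ℝ) (h11 : 0 < σ11) (h22 : 0 < σ22)
    (μ1 μ2 : ℝ) (ρ : ℝ) (hρ : ρ ∈ Set.Ioo (-1 : ℝ) 1)
    (y1 y2 : ℝ) (hy2 : 0 ≤ y2)
    (αp αq : ℝ) (hαp : cdf (gaussianReal 0 1) αp = p) (hαq : cdf (gaussianReal 0 1) αq = q)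
    (X : Ω → ℝ) (hX : Measurable X)
    (hlaw : Measure.map X ℙ =
      gaussianReal (μ2 - ρ * αp * Real.sqrt σ22) ((σ22 * (1 - ρ ^ 2)).toNNReal))
    (W : Ω → ℝ) (hW : ∀ ω, W ω = -(αp * Real.sqrt σ11 - μ1) * y1 + y2 * X ω) :
    sInf {a : ℝ | ℙ {ω | -W ω ≥ a} ≤ ENNReal.ofReal (1 - q)} =
      ((αq * Real.sqrt (1 - ρ ^ 2) + αp * ρ) * Real.sqrt σ22 - μ2) * y2
        + (αp * Real.sqrt σ11 - μ1) * y1 := by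
  obtain ⟨hq1, hq2⟩ := hq
  have hq0 : 0 < 1 - q := by linarith
  have hρ2 : 0 < 1 - ρ ^ 2 := by nlinarith [hρ.1, hρ.2]
  have hv' : 0 < σ22 * (1 - ρ ^ 2) := by positivity
  have hsv : 0 < Real.sqrt (σ22 * (1 - ρ ^ 2)) := Real.sqrt_pos.mpr hv'
  have hsqrt : Real.sqrt (σ22 * (1 - ρ ^ 2)) = Real.sqrt σ22 * Real.sqrt (1 - ρ ^ 2) :=
    Real.sqrt_mul h22.le _
  rcases hy2.lt_or_eq with h0 | h0
  · -- y2 > 0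
    set k : ℝ := αp * Real.sqrt σ11 - μ1 with hk
    set c : ℝ := μ2 - ρ * αp * Real.sqrt σ22 with hc
    have key : ∀ a : ℝ, ℙ {ω | -W ω ≥ a} = ENNReal.ofReal
        (cdf (gaussianReal 0 1) (((k * y1 - a) / y2 - c) / Real.sqrt (σ22 * (1 - ρ ^ 2)))) := by
      intro a
      have hseteq : {ω | -W ω ≥ a} = X ⁻¹' Set.Iic ((k * y1 - a) / y2) := by
        ext ω
        simp only [Set.mem_setOf_eq, Set.mem_preimage, Set.mem_Iic, hW, ge_iff_le]
        rw [le_div_iff₀ h0]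
        constructor <;> intro h <;> nlinarith
      have hstd : gaussianReal c (σ22 * (1 - ρ ^ 2)).toNNReal (Set.Iic ((k * y1 - a) / y2))
          = gaussianReal 0 1 (Set.Iic
            (((k * y1 - a) / y2 - c) / Real.sqrt (σ22 * (1 - ρ ^ 2)))) := by
        rw [← gauss_std_Iic c _ hv']
        congr 1
        rw [div_mul_cancel₀ _ hsv.ne']
        ring
      rw [hseteq, ← Measure.map_apply hX measurableSet_Iic, hlaw, hstd]
      exact (ofReal_cdf _ _).symm
    have hset : {a : ℝ | ℙ {ω | -W ω ≥ a} ≤ ENNReal.ofReal (1 - q)}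
        = Set.Ici (((αq * Real.sqrt (1 - ρ ^ 2) + αp * ρ) * Real.sqrt σ22 - μ2) * y2
            + k * y1) := by
      ext a
      rw [Set.mem_setOf_eq, key a, Set.mem_Ici,
        ENNReal.ofReal_le_ofReal_iff hq0.le]
      have h1q : 1 - q = cdf (gaussianReal 0 1) (-αq) := by rw [gauss_std_symm, hαq]
      rw [h1q, gauss_std_strictMono.le_iff_le, div_le_iff₀ hsv, sub_le_iff_le_add,
        div_le_iff₀ h0, hsqrt, hc]
      constructor <;> intro h <;> nlinarith
    rw [hset, csInf_Ici]
  · -- y2 = 0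
    have hWa : ∀ ω, -W ω = (αp * Real.sqrt σ11 - μ1) * y1 := by
      intro ω
      rw [hW, ← h0]
      ring
    have hset : {a : ℝ | ℙ {ω | -W ω ≥ a} ≤ ENNReal.ofReal (1 - q)}
        = Set.Ioi ((αp * Real.sqrt σ11 - μ1) * y1) := by
      ext a
      simp only [Set.mem_setOf_eq, hWa, Set.mem_Ioi, ge_iff_le]
      by_cases hka : a ≤ (αp * Real.sqrt σ11 - μ1) * y1
      · have : {ω : Ω | a ≤ (αp * Real.sqrt σ11 - μ1) * y1} = Set.univ := by
          ext ω; simp [hka]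
        rw [this, measure_univ]
        simp only [hka.not_gt, iff_false]
        intro hcon
        have : ENNReal.ofReal (1 - q) < 1 := by
          rw [ENNReal.ofReal_lt_one]
          linarith
        exact absurd (lt_of_le_of_lt hcon this) (lt_irrefl _)
      · have : {ω : Ω | a ≤ (αp * Real.sqrt σ11 - μ1) * y1} = ∅ := by
          ext ω; simp [hka]
        rw [this, measure_empty]
        simp only [zero_le, true_iff]
        exact lt_of_not_ge hka
    rw [hset, csInf_Ioi, ← h0]
    ring
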